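/- Suppose G is an ordered group and S is an s-unital G-graded ring. If I is a graded ideal of S, then I is graded prime if and only if I is prime. -/

import Mathlib

open Pointwise

/-- The product `UV` of two subsets of a ring: the additive subgroup consisting of all
finite sums of products `u * v` with `u ∈ U`, `v ∈ V`. -/
def setProd {S : Type*} [NonUnitalRing S] (U V : Set S) : AddSubgroup S :=
  AddSubgroup.closure (U * V)

/-- `I` is a two-sided ideal of the ring `S`. -/
def IsRingIdeal {S : Type*} [NonUnitalRing S] (I : AddSubgroup S) : Prop :=
  ∀ s : S, ∀ a ∈ I, s * a ∈ I ∧ a * s ∈ I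

section Aux

open scoped Classical

variable {S : Type*} [NonUnitalRing S]

/-- The additive subgroup generated by all `u * a * v`. -/
def genIdeal (a : S) : AddSubgroup S :=
  AddSubgroup.closure {s : S | ∃ u v : S, u * a * v = s}

lemma genIdeal_isRingIdeal (a : S) : IsRingIdeal (genIdeal a) := by
  have key : ∀ c ∈ genIdeal a, ∀ s : S, s * c ∈ genIdeal a ∧ c * s ∈ genIdeal a := by
    intro c hc
    refine AddSubgroup.closure_induction ?_ ?_ ?_ ?_ hc
    · rintro x ⟨u, v, rfl⟩ s
      constructor
      · exact AddSubgroup.subset_closure ⟨s * u, v, by simp [mul_assoc]⟩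
      · exact AddSubgroup.subset_closure ⟨u, v * s, by simp [mul_assoc]⟩
    · intro s
      constructor <;> simpa using zero_mem (genIdeal a)
    · intro x y hx hy ihx ihy s
      exact ⟨by rw [mul_add]; exact add_mem (ihx s).1 (ihy s).1,
        by rw [add_mul]; exact add_mem (ihx s).2 (ihy s).2⟩
    · intro x hx ihx s
      exact ⟨by rw [mul_neg]; exact neg_mem (ihx s).1,
        by rw [neg_mul]; exact neg_mem (ihx s).2⟩
  exact fun s c hc => key c hc s

lemma mem_genIdeal (a : S)
    (h1 : a ∈ setProd ({a} : Set S) (Set.univ : Set S))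
    (h2 : a ∈ setProd (Set.univ : Set S) ({a} : Set S)) :
    a ∈ genIdeal a := by
  have step1 : ∀ c ∈ AddSubgroup.closure ((Set.univ : Set S) * {a}),
      ∀ t : S, c * t ∈ genIdeal a := by
    intro c hc
    refine AddSubgroup.closure_induction ?_ ?_ ?_ ?_ hc
    · rintro x ⟨u, -, z, hz, rfl⟩ t
      refine AddSubgroup.subset_closure ⟨u, t, ?_⟩
      rw [show z = a from hz]
    · intro t
      simpa using zero_mem (genIdeal a)
    · intro x y hx hy ihx ihy t
      rw [add_mul]; exact add_mem (ihx t) (ihy t)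
    · intro x hx ihx t
      rw [neg_mul]; exact neg_mem (ihx t)
  have h2' : a ∈ AddSubgroup.closure ((Set.univ : Set S) * {a}) := h2
  have hsub : ({a} : Set S) * Set.univ ⊆ (genIdeal a : Set S) := by
    rintro x ⟨z, hz, t, -, rfl⟩
    rw [show z = a from hz]
    exact step1 a h2' t
  have : AddSubgroup.closure (({a} : Set S) * Set.univ) ≤ genIdeal a :=
    (AddSubgroup.closure_le _).2 hsub
  exact this h1

lemma genIdeal_prod_le (I : AddSubgroup S) (hI : IsRingIdeal I) {a b : S}
    (hab : ∀ s : S, a * s * b ∈ I) :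
    setProd (genIdeal a : Set S) (genIdeal b : Set S) ≤ I := by
  have key : ∀ c ∈ genIdeal a, ∀ d ∈ genIdeal b, c * d ∈ I := by
    intro c hc
    refine AddSubgroup.closure_induction ?_ ?_ ?_ ?_ hc
    · rintro x ⟨u, v, rfl⟩ d hd
      refine AddSubgroup.closure_induction ?_ ?_ ?_ ?_ hd
      · rintro y ⟨w, t, rfl⟩
        have heq : u * a * v * (w * b * t) = u * (a * (v * w) * b) * t := by
          simp [mul_assoc]
        rw [heq]
        exact (hI t _ ((hI u _ (hab (v * w))).1) ).2
      · simpa using zero_mem I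
      · intro y z hy hz ihy ihz
        rw [mul_add]; exact add_mem ihy ihz
      · intro y hy ihy
        rw [mul_neg]; exact neg_mem ihy
    · intro d hd
      simpa using zero_mem I
    · intro x y hx hy ihx ihy d hd
      rw [add_mul]; exact add_mem (ihx d hd) (ihy d hd)
    · intro x hx ihx d hd
      rw [neg_mul]; exact neg_mem (ihx d hd)
  show AddSubgroup.closure _ ≤ I
  rw [AddSubgroup.closure_le]
  rintro x ⟨c, hc, d, hd, rfl⟩
  exact key c hc d hd

variable {G : Type*} [Group G] [DecidableEq G]
variable (𝒮 : G → AddSubgroup S) [DirectSum.Decomposition 𝒮]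

local notation "D" => fun (c : S) (z : G) => ((DirectSum.decompose 𝒮 c) z : S)

lemma D_sum {ι : Type*} (s : Finset ι) (f : ι → S) (z : G) :
    ((DirectSum.decompose 𝒮 (∑ p ∈ s, f p)) z : S)
      = ∑ p ∈ s, ((DirectSum.decompose 𝒮 (f p)) z : S) := by
  classical
  induction s using Finset.induction_on with
  | empty => simp
  | @insert p s hp ih =>
    rw [Finset.sum_insert hp, Finset.sum_insert hp, ← ih]
    rw [DirectSum.decompose_add]
    simp [DirectSum.add_apply]

lemma D_homog_mem {A : AddSubgroup S} {c : S} {x : G} (hc : c ∈ 𝒮 x) (hcA : c ∈ A)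
    (z : G) : ((DirectSum.decompose 𝒮 c) z : S) ∈ A := by
  by_cases hzx : x = z
  · subst hzx; rw [DirectSum.decompose_of_mem_same 𝒮 hc]; exact hcA
  · rw [DirectSum.decompose_of_mem_ne 𝒮 hc hzx]; exact zero_mem A

lemma genIdeal_graded (hmul : ∀ {x y : G} {a b : S}, a ∈ 𝒮 x → b ∈ 𝒮 y → a * b ∈ 𝒮 (x * y))
    {a : S} {x : G} (ha : a ∈ 𝒮 x) :
    ∀ c ∈ genIdeal a, ∀ z : G, ((DirectSum.decompose 𝒮 c) z : S) ∈ genIdeal a := by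
  intro c hc
  refine AddSubgroup.closure_induction ?_ ?_ ?_ ?_ hc
  · rintro w ⟨u, v, rfl⟩ z
    have hu := DirectSum.sum_support_decompose 𝒮 u
    have hv := DirectSum.sum_support_decompose 𝒮 v
    have heq : u * a * v = ∑ g ∈ (DirectSum.decompose 𝒮 u).support,
        ∑ h ∈ (DirectSum.decompose 𝒮 v).support,
          ((DirectSum.decompose 𝒮 u) g : S) * a * ((DirectSum.decompose 𝒮 v) h : S) := by
      conv_lhs => rw [← hu, ← hv]
      rw [Finset.sum_mul, Finset.sum_mul]
      exact Finset.sum_congr rfl fun g _ => by rw [Finset.mul_sum]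
    rw [heq, D_sum]
    refine sum_mem fun g _ => ?_
    rw [D_sum]
    refine sum_mem fun h _ => ?_
    have hmem : ((DirectSum.decompose 𝒮 u) g : S) * a * ((DirectSum.decompose 𝒮 v) h : S)
        ∈ genIdeal a :=
      AddSubgroup.subset_closure ⟨_, _, rfl⟩
    exact D_homog_mem 𝒮 (hmul (hmul (SetLike.coe_mem _) ha) (SetLike.coe_mem _)) hmem z
  · intro z
    simpa using zero_mem (genIdeal a)
  · intro c d hc hd ihc ihd z
    rw [DirectSum.decompose_add]
    simpa [DirectSum.add_apply] using add_mem (ihc z) (ihd z)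
  · intro c hc ihc z
    have hneg : ((DirectSum.decompose 𝒮 (-c)) z : S) = -((DirectSum.decompose 𝒮 c) z : S) := by
      rw [DirectSum.decompose_neg]; rfl
    rw [hneg]
    exact neg_mem (ihc z)

variable [LinearOrder G]
    [CovariantClass G G (· * ·) (· ≤ ·)]
    [CovariantClass G G (Function.swap (· * ·)) (· ≤ ·)]

lemma top_unique' {u x g v y : G} (hu : u ≤ x) (hv : v ≤ y)
    (h : ¬(u = x ∧ v = y)) : u * g * v ≠ x * g * y := by
  rcases lt_or_eq_of_le hu with hu' | rfl
  · have : u * g * v < x * g * y :=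
      lt_of_lt_of_le (mul_lt_mul_left (mul_lt_mul_left hu' g) v) (mul_le_mul_right hv _)
    exact this.ne
  rcases lt_or_eq_of_le hv with hv' | rfl
  · exact (mul_lt_mul_right hv' _).ne
  exact absurd ⟨rfl, rfl⟩ h

/-- The top-degree component of `a * s * b` when `s` is homogeneous. -/
lemma key_component (hmul : ∀ {x y : G} {a b : S}, a ∈ 𝒮 x → b ∈ 𝒮 y → a * b ∈ 𝒮 (x * y))
    (a b s : S) (g : G) (hs : s ∈ 𝒮 g)
    (hna : (DirectSum.decompose 𝒮 a).support.Nonempty)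
    (hnb : (DirectSum.decompose 𝒮 b).support.Nonempty) :
    ((DirectSum.decompose 𝒮 (a * s * b))
        ((DirectSum.decompose 𝒮 a).support.max' hna * g
          * (DirectSum.decompose 𝒮 b).support.max' hnb) : S)
      = ((DirectSum.decompose 𝒮 a) ((DirectSum.decompose 𝒮 a).support.max' hna) : S) * s
        * ((DirectSum.decompose 𝒮 b) ((DirectSum.decompose 𝒮 b).support.max' hnb) : S) := by
  classical
  set sa := (DirectSum.decompose 𝒮 a).support with hsa
  set sb := (DirectSum.decompose 𝒮 b).support with hsb
  set x := sa.max' hna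
  set y := sb.max' hnb
  have heq : a * s * b = ∑ u ∈ sa, ∑ v ∈ sb,
      ((DirectSum.decompose 𝒮 a) u : S) * s * ((DirectSum.decompose 𝒮 b) v : S) := by
    conv_lhs => rw [← DirectSum.sum_support_decompose 𝒮 a,
      ← DirectSum.sum_support_decompose 𝒮 b]
    rw [Finset.sum_mul, Finset.sum_mul]
    exact Finset.sum_congr rfl fun g _ => by rw [Finset.mul_sum]
  rw [heq, D_sum]
  rw [Finset.sum_eq_single x]
  · rw [D_sum, Finset.sum_eq_single y]
    · exact DirectSum.decompose_of_mem_same 𝒮 (hmul (hmul (SetLike.coe_mem _) hs) (SetLike.coe_mem _))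
    · intro v hv hvy
      refine DirectSum.decompose_of_mem_ne 𝒮 (hmul (hmul (SetLike.coe_mem _) hs) (SetLike.coe_mem _)) ?_
      exact top_unique' le_rfl (Finset.le_max' sb v hv) (by tauto)
    · intro hx
      exact absurd (Finset.max'_mem sb hnb) hx
  · intro u hu hux
    rw [D_sum]
    refine Finset.sum_eq_zero fun v hv => ?_
    refine DirectSum.decompose_of_mem_ne 𝒮 (hmul (hmul (SetLike.coe_mem _) hs) (SetLike.coe_mem _)) ?_
    exact top_unique' (Finset.le_max' sa u hu) (Finset.le_max' sb v hv) (by tauto)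
  · intro hx
    exact absurd (Finset.max'_mem sa hna) hx

lemma support_sub_top {a : S} (hna : (DirectSum.decompose 𝒮 a).support.Nonempty) :
    (DirectSum.decompose 𝒮
        (a - ((DirectSum.decompose 𝒮 a) ((DirectSum.decompose 𝒮 a).support.max' hna) : S))).support
      ⊆ (DirectSum.decompose 𝒮 a).support.erase ((DirectSum.decompose 𝒮 a).support.max' hna) := by
  classical
  set x := (DirectSum.decompose 𝒮 a).support.max' hna with hxdef
  have hDu : ∀ z : G,
      ((DirectSum.decompose 𝒮 (a - ((DirectSum.decompose 𝒮 a) x : S))) z : S)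
        = ((DirectSum.decompose 𝒮 a) z : S)
          - ((DirectSum.decompose 𝒮 (((DirectSum.decompose 𝒮 a) x : S))) z : S) := by
    intro z
    rw [DirectSum.decompose_sub]
    simp
  intro u hu
  rw [DFinsupp.mem_support_iff] at hu
  have hu' : ((DirectSum.decompose 𝒮 (a - ((DirectSum.decompose 𝒮 a) x : S))) u : S) ≠ 0 :=
    fun h => hu (Subtype.ext h)
  by_cases hux : u = x
  · exfalso
    apply hu'
    rw [hux, hDu x, DirectSum.decompose_of_mem_same 𝒮 (SetLike.coe_mem _), sub_self]
  · rw [Finset.mem_erase, DFinsupp.mem_support_iff]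
    refine ⟨hux, fun h0 => hu' ?_⟩
    rw [hDu u, DirectSum.decompose_of_mem_ne 𝒮 (SetLike.coe_mem _) (fun hx => hux hx.symm), h0]
    simp

lemma eq_zero_of_support_empty {a : S} (h : (DirectSum.decompose 𝒮 a).support = ∅) :
    a = 0 := by
  classical
  have := DirectSum.sum_support_decompose 𝒮 a
  rw [h] at this
  simpa using this.symm

lemma descent (hmul : ∀ {x y : G} {a b : S}, a ∈ 𝒮 x → b ∈ 𝒮 y → a * b ∈ 𝒮 (x * y))
    (I : AddSubgroup S) (hI : IsRingIdeal I)
    (hgr : ∀ a ∈ I, ∀ x : G, ((DirectSum.decompose 𝒮 a) x : S) ∈ I)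
    (hom_case : ∀ {x y : G} {a b : S}, a ∈ 𝒮 x → b ∈ 𝒮 y →
      (∀ s : S, a * s * b ∈ I) → a ∈ I ∨ b ∈ I)
    (n : ℕ) :
    ∀ a b : S, (DirectSum.decompose 𝒮 a).support.card
        + (DirectSum.decompose 𝒮 b).support.card ≤ n →
      (∀ s : S, a * s * b ∈ I) → a ∈ I ∨ b ∈ I := by
  classical
  induction n with
  | zero =>
    intro a b hcard _
    left
    have ha : (DirectSum.decompose 𝒮 a).support = ∅ := by
      rw [← Finset.card_eq_zero]; omega
    rw [eq_zero_of_support_empty 𝒮 ha]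
    exact zero_mem I
  | succ n ih =>
    intro a b hcard hab
    by_cases haI : a ∈ I
    · exact Or.inl haI
    by_cases hbI : b ∈ I
    · exact Or.inr hbI
    exfalso
    have hna : (DirectSum.decompose 𝒮 a).support.Nonempty := by
      rw [Finset.nonempty_iff_ne_empty]
      intro h
      exact haI (by rw [eq_zero_of_support_empty 𝒮 h]; exact zero_mem I)
    have hnb : (DirectSum.decompose 𝒮 b).support.Nonempty := by
      rw [Finset.nonempty_iff_ne_empty]
      intro h
      exact hbI (by rw [eq_zero_of_support_empty 𝒮 h]; exact zero_mem I)
    set x := (DirectSum.decompose 𝒮 a).support.max' hna with hx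
    set y := (DirectSum.decompose 𝒮 b).support.max' hnb with hy
    set ax := ((DirectSum.decompose 𝒮 a) x : S) with hax
    set by' := ((DirectSum.decompose 𝒮 b) y : S) with hby
    have htop : ∀ s : S, ax * s * by' ∈ I := by
      intro s
      have hs := DirectSum.sum_support_decompose 𝒮 s
      have heq : ax * s * by' = ∑ g ∈ (DirectSum.decompose 𝒮 s).support,
          ax * ((DirectSum.decompose 𝒮 s) g : S) * by' := by
        conv_lhs => rw [← hs]
        rw [Finset.mul_sum, Finset.sum_mul]
      rw [heq]
      refine sum_mem fun g _ => ?_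
      have := key_component 𝒮 hmul a b ((DirectSum.decompose 𝒮 s) g : S) g
        (SetLike.coe_mem _) hna hnb
      rw [← this]
      exact hgr _ (hab _) _
    rcases hom_case (SetLike.coe_mem _) (SetLike.coe_mem _) htop with hxI | hyI
    · -- ax ∈ I, strip top of a
      have ha'I : a - ax ∉ I := fun h => haI (by simpa [hax] using add_mem h hxI)
      have hab' : ∀ s : S, (a - ax) * s * b ∈ I := by
        intro s
        rw [sub_mul, sub_mul]
        exact sub_mem (hab s) ((hI b _ ((hI s _ hxI).2)).2)
      have hcard' : (DirectSum.decompose 𝒮 (a - ax)).support.card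
          + (DirectSum.decompose 𝒮 b).support.card ≤ n := by
        have h1 := Finset.card_le_card (support_sub_top 𝒮 hna)
        rw [← hx, ← hax] at h1
        have h2 : ((DirectSum.decompose 𝒮 a).support.erase x).card
            < (DirectSum.decompose 𝒮 a).support.card :=
          Finset.card_erase_lt_of_mem (Finset.max'_mem _ hna)
        omega
      rcases ih (a - ax) b hcard' hab' with h | h
      · exact ha'I h
      · exact hbI h
    · -- by' ∈ I, strip top of b
      have hb'I : b - by' ∉ I := fun h => hbI (by simpa [hby] using add_mem h hyI)
      have hab' : ∀ s : S, a * s * (b - by') ∈ I := by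
        intro s
        rw [mul_sub]
        exact sub_mem (hab s) ((hI (a * s) _ hyI).1)
      have hcard' : (DirectSum.decompose 𝒮 a).support.card
          + (DirectSum.decompose 𝒮 (b - by')).support.card ≤ n := by
        have h1 := Finset.card_le_card (support_sub_top 𝒮 hnb)
        rw [← hy, ← hby] at h1
        have h2 : ((DirectSum.decompose 𝒮 b).support.erase y).card
            < (DirectSum.decompose 𝒮 b).support.card :=
          Finset.card_erase_lt_of_mem (Finset.max'_mem _ hnb)
        omega
      rcases ih a (b - by') hcard' hab' with h | h
      · exact haI h
      · exact hb'I h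

end Aux

/-- Suppose `G` is an ordered group (a group with a total order such that `a ≤ b` implies
`x * a * y ≤ x * b * y`) and `S` is an `s`-unital `G`-graded ring. If `I` is a graded
(two-sided) ideal of `S`, then `I` is graded prime if and only if `I` is prime. -/
theorem graded_prime_iff_prime {G : Type*} [Group G] [DecidableEq G] [LinearOrder G]
    [CovariantClass G G (· * ·) (· ≤ ·)]
    [CovariantClass G G (Function.swap (· * ·)) (· ≤ ·)]
    {S : Type*} [NonUnitalRing S] (𝒮 : G → AddSubgroup S)
    [DirectSum.Decomposition 𝒮]
    (hmul : ∀ {x y : G} {a b : S}, a ∈ 𝒮 x → b ∈ 𝒮 y → a * b ∈ 𝒮 (x * y))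
    (hsu : ∀ s : S, s ∈ setProd {s} (Set.univ : Set S) ∧
        s ∈ setProd (Set.univ : Set S) {s})
    (I : AddSubgroup S) (hI : IsRingIdeal I)
    (hgr : ∀ a ∈ I, ∀ x : G, ((DirectSum.decompose 𝒮 a) x : S) ∈ I) :
    (I ≠ ⊤ ∧ ∀ A B : AddSubgroup S, IsRingIdeal A → IsRingIdeal B →
        (∀ a ∈ A, ∀ x : G, ((DirectSum.decompose 𝒮 a) x : S) ∈ A) →
        (∀ b ∈ B, ∀ x : G, ((DirectSum.decompose 𝒮 b) x : S) ∈ B) →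
        setProd (A : Set S) (B : Set S) ≤ I → A ≤ I ∨ B ≤ I) ↔
    (I ≠ ⊤ ∧ ∀ A B : AddSubgroup S, IsRingIdeal A → IsRingIdeal B →
        setProd (A : Set S) (B : Set S) ≤ I → A ≤ I ∨ B ≤ I) := by
  classical
  constructor
  · rintro ⟨hne, hP⟩
    refine ⟨hne, ?_⟩
    intro A B hA hB hAB
    have hom_case : ∀ {x y : G} {a b : S}, a ∈ 𝒮 x → b ∈ 𝒮 y →
        (∀ s : S, a * s * b ∈ I) → a ∈ I ∨ b ∈ I := by
      intro x y a b ha hb hab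
      have := hP (genIdeal a) (genIdeal b) (genIdeal_isRingIdeal a) (genIdeal_isRingIdeal b)
        (genIdeal_graded 𝒮 hmul ha) (genIdeal_graded 𝒮 hmul hb)
        (genIdeal_prod_le I hI hab)
      exact this.imp (fun h => h (mem_genIdeal a (hsu a).1 (hsu a).2))
        (fun h => h (mem_genIdeal b (hsu b).1 (hsu b).2))
    have elem : ∀ a b : S, (∀ s : S, a * s * b ∈ I) → a ∈ I ∨ b ∈ I := by
      intro a b hab
      exact descent 𝒮 hmul I hI hgr hom_case
        ((DirectSum.decompose 𝒮 a).support.card + (DirectSum.decompose 𝒮 b).support.card)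
        a b le_rfl hab
    by_contra hc
    push_neg at hc
    obtain ⟨hAI, hBI⟩ := hc
    rw [SetLike.not_le_iff_exists] at hAI hBI
    obtain ⟨a, haA, haI⟩ := hAI
    obtain ⟨b, hbB, hbI⟩ := hBI
    have hab : ∀ s : S, a * s * b ∈ I := by
      intro s
      apply hAB
      exact AddSubgroup.subset_closure (Set.mul_mem_mul ((hA s a haA).2) hbB)
    rcases elem a b hab with h | h
    · exact haI h
    · exact hbI h
  · rintro ⟨hne, hP⟩
    exact ⟨hne, fun A B hA hB _ _ h => hP A B hA hB h⟩
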